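/- Let G = (V,E) be a directed graph with designated start s = v_1 (no incoming edges) and end t = v_n (no outgoing edges), n nodes and m edges, where every node except t has out-degree at least 1. If G has a Hamiltonian path from s to t, then the set T = C ∪ ⋃_{i=1}^{n−1} A_i of length-3 strings (where A_i = {A_{i,j}, B_{i,j} : 1 ≤ j ≤ δ(i)} with A_{i,j} = w_i v_{c(i,j)} w_i, B_{i,j} = v_{c(i,j)} w_i v_{c(i,j+1 mod δ(i))}, and C = {‡#w_1} ∪ {v_i # w_i : 2 ≤ i ≤ n−1} ∪ {v_n#$}) admits a common superstring of length exactly 2m + 3n. -/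

import Mathlib

/-- The alphabet {‡, #, $} ∪ V ∪ W, with all symbols pairwise distinct. -/
abbrev Gam : Type := ℕ ⊕ ℕ ⊕ Fin 3

/-- node symbol v_i -/
def vv (i : ℕ) : Gam := Sum.inl i
/-- auxiliary symbol w_i -/
def ww (i : ℕ) : Gam := Sum.inr (Sum.inl i)
def dag : Gam := Sum.inr (Sum.inr 0)
def hash : Gam := Sum.inr (Sum.inr 1)
def dollar : Gam := Sum.inr (Sum.inr 2)

namespace Stmt13

lemma range_fm_single {α} (f : ℕ → List α) {r N : ℕ} (h : r < N) :
    ∃ u v, (List.range N).flatMap f = u ++ f r ++ v := by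
  induction N with
  | zero => omega
  | succ N ih =>
    rcases Nat.lt_succ_iff_lt_or_eq.mp h with h' | rfl
    · obtain ⟨u, v, huv⟩ := ih h'
      exact ⟨u, v ++ f N, by rw [List.range_succ]; simp [huv]⟩
    · exact ⟨(List.range r).flatMap f, [], by rw [List.range_succ]; simp⟩

lemma range_fm_pair {α} (f : ℕ → List α) {r N : ℕ} (h : r + 1 < N) :
    ∃ u v, (List.range N).flatMap f = u ++ (f r ++ f (r + 1)) ++ v := by
  induction N with
  | zero => omega
  | succ N ih =>
    rcases Nat.lt_succ_iff_lt_or_eq.mp h with h' | he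
    · obtain ⟨u, v, huv⟩ := ih h'
      exact ⟨u, v ++ f N, by rw [List.range_succ]; simp [huv]⟩
    · have hN : N = r + 1 := by omega
      subst hN
      refine ⟨(List.range r).flatMap f, [], ?_⟩
      rw [List.range_succ, List.range_succ]
      simp

lemma cyc_per {d : ℕ} {f : ℕ → ℕ} (hp : ∀ x, f (x + d) = f x) :
    ∀ a b, a % d = b % d → f a = f b := by
  have key : ∀ t x, f (x + d * t) = f x := by
    intro t
    induction t with
    | zero => simp
    | succ t ih =>
      intro x
      rw [Nat.mul_succ, ← Nat.add_assoc, hp, ih]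
  intro a b h
  have ha := key (a / d) (a % d); rw [Nat.mod_add_div] at ha
  have hb := key (b / d) (b % d); rw [Nat.mod_add_div] at hb
  rw [ha, hb, h]

lemma exists_r (d q j : ℕ) (hd : 0 < d) (hj : j < d) :
    ∃ r, r < d ∧ (q + r) % d = j := by
  refine ⟨(j + (d - q % d)) % d, Nat.mod_lt _ hd, ?_⟩
  have h1 : q % d < d := Nat.mod_lt _ hd
  have m1 : q + (j + (d - q % d)) % d ≡ q + (j + (d - q % d)) [MOD d] :=
    Nat.ModEq.add_left q (Nat.mod_modEq _ d)
  have m2 : q + (j + (d - q % d)) ≡ q % d + (j + (d - q % d)) [MOD d] :=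
    Nat.ModEq.add_right _ (Nat.mod_modEq q d).symm
  have m3 : q % d + (j + (d - q % d)) = d + j := by omega
  have h4 : (q + (j + (d - q % d)) % d) % d = (d + j) % d := by
    have h := m1.trans m2
    rw [m3] at h
    exact h
  rw [h4, Nat.add_mod_left]
  exact Nat.mod_eq_of_lt hj

lemma mod_succ_eq {d x j : ℕ} (h : x % d = j % d) : (x + 1) % d = (j + 1) % d := by
  rw [Nat.add_mod x 1, Nat.add_mod j 1, h]

lemma sum_map_range (g : ℕ → ℕ) (N : ℕ) :
    ((List.range N).map g).sum = ∑ i ∈ Finset.range N, g i := by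
  induction N with
  | zero => simp
  | succ N ih => rw [List.range_succ]; simp [ih, Finset.sum_range_succ]

end Stmt13

/-- Gallant et al. reduction, existence direction: if G (nodes 0,…,n−1 with
start s = 0 and end t = n−2+1 = n−1, out-degrees δ, cyclic children c) has a
Hamiltonian path from s to t, then T = C ∪ ⋃ A_i has a common superstring of
length exactly 2m + 3n. -/
theorem stmt_13 (n m : ℕ) (hn : 2 ≤ n)
    (δ : ℕ → ℕ) (c : ℕ → ℕ → ℕ)
    -- every node except t has out-degree at least 1
    (hδ : ∀ i < n - 1, 1 ≤ δ i)
    -- child indices are cyclic modulo δ(i)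
    (hper : ∀ i < n - 1, ∀ j, c i (j + δ i) = c i j)
    -- children are nodes, and s = 0 has no incoming edges
    (hrange : ∀ i < n - 1, ∀ j, c i j < n) (hins : ∀ i < n - 1, ∀ j, c i j ≠ 0)
    -- m is the number of edges
    (hm : m = ∑ i ∈ Finset.range (n - 1), δ i)
    -- a Hamiltonian path from s = 0 to t = n − 1
    (p : ℕ → ℕ)
    (hbij : ∀ x < n, ∃! k, k < n ∧ p k = x)
    (hstart : p 0 = 0) (hend : p (n - 1) = n - 1)
    (hstep : ∀ k < n - 1, ∃ j < δ (p k), c (p k) j = p (k + 1)) :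
    -- the string set T
    let A : ℕ → ℕ → List Gam := fun i j => [ww i, vv (c i j), ww i]
    let B : ℕ → ℕ → List Gam := fun i j => [vv (c i j), ww i, vv (c i (j + 1))]
    let Cs : ℕ → List Gam := fun i =>
      if i = 0 then [dag, hash, ww 0]
      else if i = n - 1 then [vv i, hash, dollar]
      else [vv i, hash, ww i]
    let T : Set (List Gam) :=
      {S | (∃ i < n, S = Cs i) ∨ (∃ i < n - 1, ∃ j < δ i, S = A i j ∨ S = B i j)}
    -- conclusion: a common superstring of length exactly 2m + 3n exists
    ∃ Q : List Gam, Q.length = 2 * m + 3 * n ∧ ∀ S ∈ T, S <:+: Q := by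
  intro A B Cs T
  have hA : ∀ i j, A i j = [ww i, vv (c i j), ww i] := fun _ _ => rfl
  have hB : ∀ i j, B i j = [vv (c i j), ww i, vv (c i (j + 1))] := fun _ _ => rfl
  have hCs : ∀ i, Cs i = (if i = 0 then [dag, hash, ww 0]
      else if i = n - 1 then [vv i, hash, dollar]
      else [vv i, hash, ww i]) := fun _ => rfl
  -- choice of the Hamiltonian edge index
  have hstep' : ∀ k, ∃ j, k < n - 1 → j < δ (p k) ∧ c (p k) j = p (k + 1) := by
    intro k
    by_cases h : k < n - 1
    · obtain ⟨j, hj1, hj2⟩ := hstep k h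
      exact ⟨j, fun _ => ⟨hj1, hj2⟩⟩
    · exact ⟨0, fun h' => absurd h' h⟩
  choose q hq using hstep'
  -- inverse of the Hamiltonian path
  have hbij' : ∀ x, ∃ k, x < n → (k < n ∧ p k = x ∧ ∀ k', k' < n → p k' = x → k' = k) := by
    intro x
    by_cases h : x < n
    · obtain ⟨k, ⟨hk1, hk2⟩, hk3⟩ := hbij x h
      exact ⟨k, fun _ => ⟨hk1, hk2, fun k' h1 h2 => hk3 k' ⟨h1, h2⟩⟩⟩
    · exact ⟨0, fun h' => absurd h' h⟩
  choose e he using hbij'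
  have hpn : ∀ k < n, p k < n := by
    have himg : Finset.image (fun x => e x) (Finset.range n) = Finset.range n := by
      apply Finset.eq_of_subset_of_card_le
      · intro k hk
        simp only [Finset.mem_image, Finset.mem_range] at hk ⊢
        obtain ⟨x, hx, rfl⟩ := hk
        exact (he x hx).1
      · rw [Finset.card_image_of_injOn]
        intro x hx y hy hxy
        simp only [Finset.coe_range, Set.mem_Iio] at hx hy
        have hxy' : e x = e y := hxy
        rw [← (he x hx).2.1, ← (he y hy).2.1, hxy']
    intro k hk
    have hmem : k ∈ Finset.image (fun x => e x) (Finset.range n) := by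
      rw [himg]; exact Finset.mem_range.mpr hk
    simp only [Finset.mem_image, Finset.mem_range] at hmem
    obtain ⟨x, hx, hex⟩ := hmem
    have hpe := (he x hx).2.1
    rw [← hex, hpe]
    exact hx
  have hinj : ∀ k₁ < n, ∀ k₂ < n, p k₁ = p k₂ → k₁ = k₂ := by
    intro k1 h1 k2 h2 hp
    have hx := hpn k1 h1
    rw [(he (p k1) hx).2.2 k1 h1 rfl, (he (p k1) hx).2.2 k2 h2 hp.symm]
  have hp_lt : ∀ k < n - 1, p k < n - 1 := by
    intro k hk
    have h1 : p k < n := hpn k (by omega)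
    have h2 : p k ≠ n - 1 := by
      intro hcontra
      have : k = n - 1 := hinj k (by omega) (n - 1) (by omega) (by rw [hcontra, hend])
      omega
    omega
  have he_lt : ∀ i < n - 1, e i < n - 1 := by
    intro i hi
    have h1 : e i < n := (he i (by omega)).1
    have h2 : e i ≠ n - 1 := by
      intro hcontra
      have := (he i (by omega)).2.1
      rw [hcontra, hend] at this
      omega
    omega
  -- the superstring
  set seg : ℕ → List Gam := fun k =>
    (if k = 0 then dag else vv (p k)) :: hash ::
      (((List.range (δ (p k))).flatMap fun r => [ww (p k), vv (c (p k) (q k + r))])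
        ++ [ww (p k)]) with hsegdef
  refine ⟨(List.range (n - 1)).flatMap seg ++ [vv (n - 1), hash, dollar], ?_, ?_⟩
  · -- length
    have hseglen : ∀ k, (seg k).length = 2 * δ (p k) + 3 := by
      intro k
      rw [hsegdef]
      simp only [List.length_cons, List.length_append, List.length_flatMap]
      rw [show (List.map (fun _ => ([] : List Gam).length + 1 + 1)
            (List.range (δ (p k)))) = (List.range (δ (p k))).map (fun _ => 2) by
          apply List.map_congr_left; intro a _; rfl]
      rw [Stmt13.sum_map_range]
      simp only [Finset.sum_const, Finset.card_range, smul_eq_mul, List.length_singleton,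
        List.length_cons, List.length_nil]
      omega
    have hsum : ∑ k ∈ Finset.range (n - 1), δ (p k) = ∑ i ∈ Finset.range (n - 1), δ i := by
      refine Finset.sum_nbij' p e ?_ ?_ ?_ ?_ ?_
      · intro k hk
        exact Finset.mem_range.mpr (hp_lt k (Finset.mem_range.mp hk))
      · intro i hi
        exact Finset.mem_range.mpr (he_lt i (Finset.mem_range.mp hi))
      · intro k hk
        have hk' := Finset.mem_range.mp hk
        exact ((he (p k) (hpn k (by omega))).2.2 k (by omega) rfl).symm
      · intro i hi
        exact (he i (by have := Finset.mem_range.mp hi; omega)).2.1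
      · intro k _; rfl
    rw [List.length_append, List.length_flatMap, Stmt13.sum_map_range]
    have hcong : ∑ k ∈ Finset.range (n - 1), (seg k).length
        = ∑ k ∈ Finset.range (n - 1), (2 * δ (p k) + 3) :=
      Finset.sum_congr rfl (fun k _ => hseglen k)
    rw [hcong, Finset.sum_add_distrib, ← Finset.mul_sum, hsum, ← hm]
    simp only [Finset.sum_const, Finset.card_range, smul_eq_mul, List.length_cons,
      List.length_nil]
    omega
  · -- membership
    have hfull : ∀ k, k < n - 1 → seg k ++ [vv (p (k + 1))] =
        (if k = 0 then dag else vv (p k)) :: hash ::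
          ((List.range (δ (p k) + 1)).flatMap fun r => [ww (p k), vv (c (p k) (q k + r))]) := by
      intro k hk
      have h1 : c (p k) (q k + δ (p k)) = p (k + 1) := by
        rw [hper (p k) (hp_lt k hk) (q k)]
        exact (hq k hk).2
      rw [hsegdef]
      simp [List.range_succ, h1]
    have hchain : ∀ k, k < n - 1 → (seg k ++ [vv (p (k + 1))]) <:+:
        ((List.range (n - 1)).flatMap seg ++ [vv (n - 1), hash, dollar]) := by
      intro k hk
      by_cases h : k + 1 < n - 1
      · obtain ⟨u, v, huv⟩ := Stmt13.range_fm_pair seg h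
        have hX : seg (k + 1) = vv (p (k + 1)) :: (hash ::
            (((List.range (δ (p (k + 1)))).flatMap
                fun r => [ww (p (k + 1)), vv (c (p (k + 1)) (q (k + 1) + r))])
              ++ [ww (p (k + 1))])) := by
          rw [hsegdef]
          simp
        refine ⟨u, (hash ::
            (((List.range (δ (p (k + 1)))).flatMap
                fun r => [ww (p (k + 1)), vv (c (p (k + 1)) (q (k + 1) + r))])
              ++ [ww (p (k + 1))])) ++ v ++ [vv (n - 1), hash, dollar], ?_⟩
        rw [huv, hX]
        simp
      · have h2 : n - 1 = k + 1 := by omega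
        have h3 : p (k + 1) = n - 1 := by rw [← h2]; exact hend
        refine ⟨(List.range k).flatMap seg, [hash, dollar], ?_⟩
        rw [h2, List.range_succ, h3]
        simp [h2]
    have hfullinf : ∀ k, k < n - 1 →
        ((if k = 0 then dag else vv (p k)) :: hash ::
          ((List.range (δ (p k) + 1)).flatMap fun r => [ww (p k), vv (c (p k) (q k + r))]))
        <:+: ((List.range (n - 1)).flatMap seg ++ [vv (n - 1), hash, dollar]) := by
      intro k hk
      rw [← hfull k hk]
      exact hchain k hk
    have hpre : ∀ k, k < n - 1 →
        [(if k = 0 then dag else vv (p k)), hash, ww (p k)] <:+: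
          ((List.range (n - 1)).flatMap seg ++ [vv (n - 1), hash, dollar]) := by
      intro k hk
      refine List.IsInfix.trans ?_ (hfullinf k hk)
      refine ⟨[], vv (c (p k) (q k + 0)) ::
        ((List.map Nat.succ (List.range (δ (p k)))).flatMap
          fun r => [ww (p k), vv (c (p k) (q k + r))]), ?_⟩
      rw [List.range_succ_eq_map]
      simp
    intro S hS
    have hS' : (∃ i < n, S = Cs i) ∨ (∃ i < n - 1, ∃ j < δ i, S = A i j ∨ S = B i j) := hS
    rcases hS' with ⟨i, hi, rfl⟩ | ⟨i, hi, j, hj, hAB⟩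
    · -- C strings
      by_cases hit : i = n - 1
      · subst hit
        rw [hCs, if_neg (by omega), if_pos rfl]
        exact ⟨(List.range (n - 1)).flatMap seg, [], by simp⟩
      · have hi2 : i < n - 1 := by omega
        have hk2 : p (e i) = i := (he i hi).2.1
        have hkn : e i < n - 1 := he_lt i hi2
        by_cases hi0 : i = 0
        · subst hi0
          have hk0 : e 0 = 0 := ((he 0 hi).2.2 0 (by omega) hstart).symm
          rw [hCs, if_pos rfl]
          have hx := hpre (e 0) hkn
          rw [hk0] at hx
          simpa [hstart] using hx
        · have hk0 : e i ≠ 0 := by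
            intro hcontra
            rw [hcontra, hstart] at hk2
            exact hi0 hk2.symm
          rw [hCs, if_neg hi0, if_neg hit]
          have hx := hpre (e i) hkn
          rw [hk2, if_neg hk0] at hx
          exact hx
    · -- A and B strings
      have hi' : i < n := by omega
      have hk2 : p (e i) = i := (he i hi').2.1
      have hkn : e i < n - 1 := he_lt i hi
      have hd : 0 < δ i := hδ i hi
      obtain ⟨r, hr, hmod⟩ := Stmt13.exists_r (δ i) (q (e i)) j hd hj
      have hperi : ∀ x, c i (x + δ i) = c i x := hper i hi
      have hc1 : c i (q (e i) + r) = c i j :=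
        Stmt13.cyc_per hperi _ _ (by rw [hmod, Nat.mod_eq_of_lt hj])
      have hc2 : c i (q (e i) + (r + 1)) = c i (j + 1) := by
        have harr : q (e i) + (r + 1) = q (e i) + r + 1 := by omega
        rw [harr]
        exact Stmt13.cyc_per hperi _ _
          (Stmt13.mod_succ_eq (by rw [hmod, Nat.mod_eq_of_lt hj]))
      obtain ⟨u, v, huv⟩ := Stmt13.range_fm_pair
        (fun r => [ww i, vv (c i (q (e i) + r))]) (show r + 1 < δ i + 1 by omega)
      have hful := hfullinf (e i) hkn
      rw [hk2] at hful
      rcases hAB with rfl | rfl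
      · rw [hA]
        refine List.IsInfix.trans ?_ hful
        refine ⟨(if e i = 0 then dag else vv i) :: hash :: u,
          [vv (c i (q (e i) + (r + 1)))] ++ v, ?_⟩
        rw [huv]
        simp [hc1, hc2]
      · rw [hB]
        refine List.IsInfix.trans ?_ hful
        refine ⟨(if e i = 0 then dag else vv i) :: hash :: (u ++ [ww i]), v, ?_⟩
        rw [huv]
        simp [hc1, hc2]
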